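/- Suppose block 1 consists of a single index r₁, i.e. #{r : b r = 1} = 1 with b r₁ = 1. For an index u with b u = 2, let E_u ∈ N^{12} denote the matrix with entry 1 in position (r₁, u) and 0 elsewhere. Let f : N → N be an F-linear map such that f(A) = 0 for every A ∈ N^{ij} with (i,j) ≠ (1,2), f(N^{12}) ⊆ N^{2t} (i.e. for A ∈ N^{12}, f(A) r s = 0 unless b r = 2 and b s = t), and f(E_u) v s = f(E_v) u s for all indices u, v with b u = b v = 2 and all s with b s = t. Then f is a derivation of N. -/

import Mathlib

/-- `A` is a strictly block upper triangular matrix relative to the block function `b`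
(index `r` lies in block `b r`): `A r s = 0` whenever `b r ≥ b s`. -/
def InN {F : Type*} [Field F] {n : ℕ} (b : Fin n → ℕ)
    (A : Matrix (Fin n) (Fin n) F) : Prop :=
  ∀ r s, b s ≤ b r → A r s = 0

/-- `A` lies in the `(i,j)` block `N^{ij}`: `A r s = 0` unless `b r = i` and `b s = j`. -/
def InBlk {F : Type*} [Field F] {n : ℕ} (b : Fin n → ℕ) (i j : ℕ)
    (A : Matrix (Fin n) (Fin n) F) : Prop :=
  ∀ r s, ¬(b r = i ∧ b s = j) → A r s = 0

/-- `f` is a derivation of the Lie algebra `N` of strictly block upper triangular matrices: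
it maps `N` into `N` and satisfies `f [X,Y] = [f X, Y] + [X, f Y]` on `N`,
where `[X,Y] = XY - YX`. -/
def IsDerN {F : Type*} [Field F] {n : ℕ} (b : Fin n → ℕ)
    (f : Matrix (Fin n) (Fin n) F →ₗ[F] Matrix (Fin n) (Fin n) F) : Prop :=
  (∀ A, InN b A → InN b (f A)) ∧
  ∀ X Y, InN b X → InN b Y →
    f (X * Y - Y * X) = (f X * Y - Y * f X) + (X * f Y - f Y * X)

/-- converse part of Lemma on `f(N^{12})_{2t}`: if block 1 is a single index
`r₁` and a linear map `f : N → N` vanishes on every `N^{ij}` with `(i,j) ≠ (1,2)`, maps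
`N^{12}` into `N^{2t}`, and satisfies the row-symmetry condition
`f(E_u) v s = f(E_v) u s`, then `f` is a derivation of `N`. -/
theorem stmt9 {F : Type*} [Field F] {n t : ℕ} (b : Fin n → ℕ)
    (hn : 1 ≤ n) (ht : 3 ≤ t) (hmono : Monotone b)
    (hlb : ∀ r, 1 ≤ b r) (hub : ∀ r, b r ≤ t)
    (hsurj : ∀ k, 1 ≤ k → k ≤ t → ∃ r, b r = k)
    (r₁ : Fin n) (hr₁ : b r₁ = 1)
    (hcard : (Finset.univ.filter fun r => b r = 1).card = 1)
    (f : Matrix (Fin n) (Fin n) F →ₗ[F] Matrix (Fin n) (Fin n) F)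
    (hzero : ∀ i j, 1 ≤ i → i < j → j ≤ t → ¬(i = 1 ∧ j = 2) →
      ∀ A, InBlk b i j A → f A = 0)
    (h12 : ∀ A, InBlk b 1 2 A → InBlk b 2 t (f A))
    (hsym : ∀ u v, b u = 2 → b v = 2 → ∀ s, b s = t →
      f (Matrix.single r₁ u (1 : F)) v s
        = f (Matrix.single r₁ v (1 : F)) u s) :
    IsDerN b f := by
  classical
  -- uniqueness of the block-1 index
  have huniq : ∀ r : Fin n, b r = 1 → r = r₁ := by
    intro r hr
    rcases Finset.card_eq_one.mp hcard with ⟨a, ha⟩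
    have h1 : r ∈ Finset.univ.filter fun r => b r = 1 := by simp [hr]
    have h2 : r₁ ∈ Finset.univ.filter fun r => b r = 1 := by simp [hr₁]
    rw [ha, Finset.mem_singleton] at h1 h2
    rw [h1, h2]
  -- the (1,2)-block projection
  set P : Matrix (Fin n) (Fin n) F → Matrix (Fin n) (Fin n) F :=
    fun A => Matrix.of fun r s => if b r = 1 ∧ b s = 2 then A r s else 0 with hPdef
  have hPblk : ∀ A, InBlk b 1 2 (P A) := by
    intro A r s h
    simp only [hPdef, Matrix.of_apply, if_neg h]
  -- f A = f (P A) for A ∈ N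
  have hdecomp : ∀ A, InN b A → f A = f (P A) := by
    intro A hA
    set S : Finset (ℕ × ℕ) := Finset.range (t+1) ×ˢ Finset.range (t+1) with hS
    set Q : ℕ × ℕ → Matrix (Fin n) (Fin n) F :=
      fun p => Matrix.of fun r s => if b r = p.1 ∧ b s = p.2 then A r s else 0 with hQ
    have hfull : ∑ p ∈ S, Q p = A := by
      funext r s
      rw [Matrix.sum_apply]
      rw [Finset.sum_eq_single (b r, b s)]
      · simp [hQ]
      · intro p hp hne
        simp only [hQ, Matrix.of_apply]
        rw [if_neg]
        rintro ⟨h1, h2⟩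
        exact hne (by cases p; simp_all)
      · intro hmem
        exact absurd (Finset.mk_mem_product (by simp [Nat.lt_succ_iff, hub r])
          (by simp [Nat.lt_succ_iff, hub s])) hmem
    have hmem12 : ((1:ℕ), (2:ℕ)) ∈ S := by
      refine Finset.mk_mem_product ?_ ?_ <;> simp [Nat.lt_succ_iff] <;> omega
    have hQ12 : Q (1, 2) = P A := rfl
    have hsub : A - P A = ∑ p ∈ S.erase (1, 2), Q p := by
      rw [Finset.sum_erase_eq_sub hmem12, hfull, hQ12]
    have hz : f (A - P A) = 0 := by
      rw [hsub, map_sum, Finset.sum_eq_zero]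
      intro p hp
      have hpne : p ≠ (1, 2) := Finset.ne_of_mem_erase hp
      have hpS : p ∈ S := Finset.mem_of_mem_erase hp
      have hp1 : p.1 ≤ t := by
        have := (Finset.mem_product.mp hpS).1
        simp [Nat.lt_succ_iff] at this; exact this
      have hp2 : p.2 ≤ t := by
        have := (Finset.mem_product.mp hpS).2
        simp [Nat.lt_succ_iff] at this; exact this
      by_cases hgood : 1 ≤ p.1 ∧ p.1 < p.2
      · refine hzero p.1 p.2 hgood.1 hgood.2 hp2 ?_ (Q p) ?_
        · intro ⟨h1, h2⟩; exact hpne (by rw [Prod.ext_iff]; exact ⟨h1, h2⟩)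
        · intro r s h
          simp only [hQ, Matrix.of_apply, if_neg h]
      · have : Q p = 0 := by
          funext r s
          simp only [hQ, Matrix.of_apply, Matrix.zero_apply]
          by_cases h : b r = p.1 ∧ b s = p.2
          · rw [if_pos h]
            apply hA
            push_neg at hgood
            rcases Nat.lt_or_ge p.1 1 with h1 | h1
            · exact absurd (h.1 ▸ hlb r) (by omega)
            · have := hgood h1
              omega
          · rw [if_neg h]
        rw [this, map_zero]
    have hz' : f A - f (P A) = 0 := by rw [← map_sub]; exact hz
    exact sub_eq_zero.mp hz' 
  -- f A lands in block (2,t)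
  have hblk : ∀ A, InN b A → InBlk b 2 t (f A) := by
    intro A hA
    rw [hdecomp A hA]
    exact h12 _ (hPblk A)
  -- block (2,t) matrices are in N
  have hblkN : ∀ M : Matrix (Fin n) (Fin n) F, InBlk b 2 t M → InN b M := by
    intro M hM r s hrs
    apply hM
    intro ⟨h1, h2⟩
    omega
  -- the block-2 index set
  set S2 : Finset (Fin n) := Finset.univ.filter fun v => b v = 2 with hS2
  set E : Fin n → Matrix (Fin n) (Fin n) F :=
    fun v => Matrix.single r₁ v (1 : F) with hE
  have hEblk : ∀ v, b v = 2 → InBlk b 1 2 (E v) := by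
    intro v hv r s h
    simp only [hE]
    rw [Matrix.single]
    simp only [Matrix.of_apply]
    rw [if_neg]
    rintro ⟨h1, h2⟩
    exact h ⟨h1 ▸ hr₁, h2 ▸ hv⟩
  have hfE : ∀ v, b v = 2 → InBlk b 2 t (f (E v)) := fun v hv => h12 _ (hEblk v hv)
  -- expansion of f on N
  have hfexp : ∀ A, InN b A → f A = ∑ v ∈ S2, A r₁ v • f (E v) := by
    intro A hA
    rw [hdecomp A hA]
    have hPexp : P A = ∑ v ∈ S2, A r₁ v • E v := by
      funext r s
      rw [Matrix.sum_apply]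
      simp only [Matrix.smul_apply, hE, Matrix.single, Matrix.of_apply,
        smul_eq_mul, mul_ite, mul_one, mul_zero]
      by_cases hcase : r = r₁ ∧ b s = 2
      · obtain ⟨hr, hs⟩ := hcase
        subst hr
        rw [Finset.sum_eq_single s]
        · simp [hPdef, hr₁, hs]
        · intro v hv hne
          rw [if_neg]; rintro ⟨-, h2⟩; exact hne h2
        · intro hs'
          exact absurd (by simp [hS2, hs]) hs'
      · rw [Finset.sum_eq_zero, eq_comm]
        · simp only [hPdef, Matrix.of_apply]
          rw [if_neg]
          rintro ⟨h1, h2⟩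
          exact hcase ⟨huniq r h1, h2⟩
        · intro v hv
          rw [if_neg]
          rintro ⟨h1, h2⟩
          apply hcase
          refine ⟨h1.symm, ?_⟩
          rw [← h2]
          simp [hS2] at hv
          exact hv
    rw [hPexp, map_sum]
    simp only [map_smul]
  constructor
  · -- f maps N into N
    intro A hA
    exact hblkN _ (hblk A hA)
  · intro X Y hX hY
    -- the bracket has zero (1,2) block
    have hmulN : ∀ (U V : Matrix (Fin n) (Fin n) F), InN b U → InN b V → InN b (U * V) := by
      intro U V hU hV r s hrs
      rw [Matrix.mul_apply, Finset.sum_eq_zero]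
      intro q _
      rcases le_or_gt (b s) (b q) with h | h
      · rw [hV q s h, mul_zero]
      · rw [hU r q (by omega), zero_mul]
    have hbrN : InN b (X * Y - Y * X) := by
      intro r s hrs
      simp only [Matrix.sub_apply]
      rw [hmulN X Y hX hY r s hrs, hmulN Y X hY hX r s hrs, sub_zero]
    -- (a) f of the bracket vanishes
    have ha : f (X * Y - Y * X) = 0 := by
      rw [hdecomp _ hbrN]
      have : P (X * Y - Y * X) = 0 := by
        funext r s
        simp only [hPdef, Matrix.of_apply, Matrix.zero_apply]
        by_cases h : b r = 1 ∧ b s = 2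
        · rw [if_pos h]
          obtain ⟨h1, h2⟩ := h
          simp only [Matrix.sub_apply, Matrix.mul_apply]
          have hterm : ∀ (U V : Matrix (Fin n) (Fin n) F), InN b U → InN b V →
              ∀ q, U r q * V q s = 0 := by
            intro U V hU hV q
            rcases le_or_gt (b s) (b q) with h | h
            · rw [hV q s h, mul_zero]
            · rw [hU r q (by omega), zero_mul]
          rw [Finset.sum_eq_zero (fun q _ => hterm X Y hX hY q),
            Finset.sum_eq_zero (fun q _ => hterm Y X hY hX q), sub_zero]
        · rw [if_neg h]
      rw [this, map_zero]
    -- (b) products with f on the left of an N element vanish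
    have hb : ∀ (U V : Matrix (Fin n) (Fin n) F), InN b U → InN b V → f U * V = 0 := by
      intro U V hU hV
      have hfU := hblk U hU
      funext r s
      simp only [Matrix.mul_apply, Matrix.zero_apply]
      rw [Finset.sum_eq_zero]
      intro q _
      by_cases h : b r = 2 ∧ b q = t
      · rw [hV q s (h.2 ▸ hub s), mul_zero]
      · rw [hfU r q h, zero_mul]
    -- (c) the cross terms agree
    have hc : X * f Y = Y * f X := by
      funext r s
      simp only [Matrix.mul_apply]
      have hexpand : ∀ (U V : Matrix (Fin n) (Fin n) F), InN b U → InN b V →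
          ∑ q, U r q * f V q s = ∑ q ∈ S2, ∑ v ∈ S2, U r q * (V r₁ v * f (E v) q s) := by
        intro U V hU hV
        have h1 : ∀ q, f V q s = ∑ v ∈ S2, V r₁ v * f (E v) q s := by
          intro q
          rw [hfexp V hV, Matrix.sum_apply]
          simp only [Matrix.smul_apply, smul_eq_mul]
        calc ∑ q, U r q * f V q s
            = ∑ q ∈ Finset.univ, ∑ v ∈ S2, U r q * (V r₁ v * f (E v) q s) := by
              refine Finset.sum_congr rfl fun q _ => ?_
              rw [h1 q, Finset.mul_sum]
          _ = ∑ q ∈ S2, ∑ v ∈ S2, U r q * (V r₁ v * f (E v) q s) := by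
              rw [← Finset.sum_subset (Finset.subset_univ S2)]
              intro q _ hq
              rw [Finset.sum_eq_zero]
              intro v hv
              have hvq : ¬ (b q = 2 ∧ b s = t) := by
                intro ⟨h1', _⟩
                exact hq (by simp [hS2, h1'])
              rw [hfE v (by simpa [hS2] using hv) q s hvq, mul_zero, mul_zero]
      rw [hexpand X Y hX hY, hexpand Y X hY hX]
      by_cases hrr : r = r₁
      · subst hrr
        by_cases hst : b s = t
        · have hsymm : ∀ q ∈ S2, ∀ v ∈ S2, f (E v) q s = f (E q) v s := by
            intro q hq v hv
            exact hsym v q (by simpa [hS2] using hv) (by simpa [hS2] using hq) s hst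
          calc ∑ q ∈ S2, ∑ v ∈ S2, X r q * (Y r v * f (E v) q s)
              = ∑ q ∈ S2, ∑ v ∈ S2, X r q * (Y r v * f (E q) v s) := by
                refine Finset.sum_congr rfl fun q hq => Finset.sum_congr rfl fun v hv => ?_
                rw [hsymm q hq v hv]
            _ = ∑ v ∈ S2, ∑ q ∈ S2, X r q * (Y r v * f (E q) v s) := Finset.sum_comm
            _ = ∑ q ∈ S2, ∑ v ∈ S2, Y r q * (X r v * f (E v) q s) := by
                refine Finset.sum_congr rfl fun q hq => Finset.sum_congr rfl fun v hv => ?_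
                ring
        · rw [Finset.sum_eq_zero, Finset.sum_eq_zero]
          all_goals {
            intro q hq
            rw [Finset.sum_eq_zero]
            intro v hv
            rw [hfE v (by simpa [hS2] using hv) q s (fun h => hst h.2), mul_zero, mul_zero] }
      · -- r not in block 1: all terms vanish
        have hXr : ∀ q ∈ S2, X r q = 0 := by
          intro q hq
          have hq2 : b q = 2 := by simpa [hS2] using hq
          apply hX
          have : b r ≠ 1 := fun h => hrr (huniq r h)
          have := hlb r
          omega
        have hYr : ∀ q ∈ S2, Y r q = 0 := by
          intro q hq
          have hq2 : b q = 2 := by simpa [hS2] using hq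
          apply hY
          have : b r ≠ 1 := fun h => hrr (huniq r h)
          have := hlb r
          omega
        rw [Finset.sum_eq_zero, Finset.sum_eq_zero]
        · intro q hq
          rw [Finset.sum_eq_zero]
          intro v _
          rw [hYr q hq, zero_mul]
        · intro q hq
          rw [Finset.sum_eq_zero]
          intro v _
          rw [hXr q hq, zero_mul]
    rw [ha, hb X Y hX hY, hb Y X hY hX, hc]
    abel
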